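/- Let q = (q₁,q₂) : ℝ → ℝ² be a twice differentiable curve satisfying the Sawada–Kotera equations q̈₁(t) = −q₁(t)(1 + 2q₂(t)) and q̈₂(t) = −q₂(t) − q₁(t)² − q₂(t)² for all t. Then K(t) = q̇₁(t)q̇₂(t) + q₁(t)q₂(t) + ⅓q₁(t)³ + q₁(t)q₂(t)² is constant in t. -/

import Mathlib

/-- Along solutions of the Sawada–Kotera equations, the quantity
`K = q̇₁q̇₂ + q₁q₂ + ⅓q₁³ + q₁q₂²` is a first integral. -/
theorem stmt_7 (q₁ q₂ : ℝ → ℝ)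
    (hq₁ : Differentiable ℝ q₁) (hq₁' : Differentiable ℝ (deriv q₁))
    (hq₂ : Differentiable ℝ q₂) (hq₂' : Differentiable ℝ (deriv q₂))
    (heq₁ : ∀ t : ℝ, deriv (deriv q₁) t = -q₁ t * (1 + 2 * q₂ t))
    (heq₂ : ∀ t : ℝ, deriv (deriv q₂) t = -q₂ t - (q₁ t) ^ 2 - (q₂ t) ^ 2) :
    ∃ c : ℝ, ∀ t : ℝ,
      deriv q₁ t * deriv q₂ t + q₁ t * q₂ t + (1 / 3) * (q₁ t) ^ 3
        + q₁ t * (q₂ t) ^ 2 = c := by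
  set K : ℝ → ℝ := fun t => deriv q₁ t * deriv q₂ t + q₁ t * q₂ t
      + (1 / 3) * (q₁ t) ^ 3 + q₁ t * (q₂ t) ^ 2 with hK
  have key : ∀ t : ℝ, HasDerivAt K 0 t := by
    intro t
    have h1 := (hq₁ t).hasDerivAt
    have h2 := (hq₂ t).hasDerivAt
    have h1' := (hq₁' t).hasDerivAt
    have h2' := (hq₂' t).hasDerivAt
    rw [heq₁ t] at h1'
    rw [heq₂ t] at h2'
    have big := (((h1'.mul h2').add (h1.mul h2)).add
        ((h1.pow 3).const_mul (1/3 : ℝ))).add (h1.mul (h2.pow 2))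
    convert big using 1
    · rfl
    · rfl
    · rfl
    · simp only [Pi.pow_apply]
      ring
  have hc : ∀ t : ℝ, K t = K 0 :=
    fun t => is_const_of_deriv_eq_zero (fun x => (key x).differentiableAt)
      (fun x => (key x).deriv) t 0
  exact ⟨K 0, hc⟩
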